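/- Let β' be a sparse RNN parameter with nnz(w^h(β')) ≤ r_{w_h} where r_{w_h} ≥ 1 (h = 1,…,H), nnz(v^h(β')) ≤ r_{v_h} where r_{v_h} ≥ 1 (h = 1,…,H−1), and all entries bounded in absolute value by E' ≥ 1. Let β̃ be any RNN parameter (same architecture) with |β'_j − β̃_j| ≤ δ₂ for every index j, where δ₂ ≥ 0. Then for every t ≥ 1, Σ_{j=1}^{L_H} |O_t(β')(j) − O_t(β̃)(j)| ≤ t^H · δ₂ · (p·L_1 + Σ_{k=1}^{H} L_k) · (Π_{k=1}^{H} [δ₂·L_k + r_{w_k}·E']) · (Π_{k=1}^{H−1} [δ₂·L_k + r_{v_k}·E'])^{t−1}. -/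
import Mathlib

open Finset

set_option maxHeartbeats 1000000

/-- Number of nonzero entries of a matrix. -/
noncomputable def nnz {m n : Type*} [Fintype m] [Fintype n] (A : Matrix m n ℝ) : ℕ :=
  Nat.card {p : m × n // A p.1 p.2 ≠ 0}

/-- One time-step of the RNN: given the previous time slice `prev` of hidden states and the
current input `xt`, compute the hidden states of all layers at the current time. -/
noncomputable def zLayer (L : ℕ → ℕ)
    (w : (h : ℕ) → Matrix (Fin (L h)) (Fin (L (h - 1))) ℝ)
    (v : (h : ℕ) → Matrix (Fin (L h)) (Fin (L h)) ℝ)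
    (ψ : ℕ → ℝ → ℝ)
    (prev : (h : ℕ) → Fin (L h) → ℝ) (xt : Fin (L 0) → ℝ) :
    (h : ℕ) → Fin (L h) → ℝ
  | 0 => xt
  | h + 1 => fun j =>
      ψ (h + 1) ((w (h + 1)).mulVec (zLayer L w v ψ prev xt h) j
        + (v (h + 1)).mulVec (prev (h + 1)) j)

/-- The hidden states `hiddenState L w v ψ x t h : Fin (L h) → ℝ` of the RNN:
`hiddenState L w v ψ x t 0 = x t` for `t ≥ 1`, `hiddenState L w v ψ x 0 h = 0`, and
`hiddenState L w v ψ x t h = ψ h (w h ⬝ z_t^{h-1} + v h ⬝ z_{t-1}^h)` for `t, h ≥ 1`. -/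
noncomputable def hiddenState (L : ℕ → ℕ)
    (w : (h : ℕ) → Matrix (Fin (L h)) (Fin (L (h - 1))) ℝ)
    (v : (h : ℕ) → Matrix (Fin (L h)) (Fin (L h)) ℝ)
    (ψ : ℕ → ℝ → ℝ)
    (x : ℕ → Fin (L 0) → ℝ) : ℕ → (h : ℕ) → Fin (L h) → ℝ
  | 0 => fun _ _ => 0
  | t + 1 => zLayer L w v ψ (hiddenState L w v ψ x t) (x (t + 1))

/-- The output of the `H`-layer RNN at time `t`: `O_t = w^H z_t^{H-1}`. -/
noncomputable def output (L : ℕ → ℕ) (H : ℕ)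
    (w : (h : ℕ) → Matrix (Fin (L h)) (Fin (L (h - 1))) ℝ)
    (v : (h : ℕ) → Matrix (Fin (L h)) (Fin (L h)) ℝ)
    (ψ : ℕ → ℝ → ℝ)
    (x : ℕ → Fin (L 0) → ℝ) (t : ℕ) : Fin (L H) → ℝ :=
  (w H).mulVec (hiddenState L w v ψ x t (H - 1))

/- ### Auxiliary lemmas -/

lemma l1_mulVec_le {a b : ℕ} (A : Matrix (Fin a) (Fin b) ℝ) (u : Fin b → ℝ) (cc : ℝ)
    (hcol : ∀ k, ∑ j, |A j k| ≤ cc) :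
    ∑ j, |A.mulVec u j| ≤ cc * ∑ k, |u k| := by
  calc ∑ j, |A.mulVec u j| ≤ ∑ j, ∑ k, |A j k| * |u k| := by
        refine Finset.sum_le_sum fun j _ => ?_
        simp only [Matrix.mulVec, dotProduct]
        refine le_trans (Finset.abs_sum_le_sum_abs _ _) ?_
        simp [abs_mul]
    _ = ∑ k, (∑ j, |A j k|) * |u k| := by
        rw [Finset.sum_comm]
        simp [Finset.sum_mul]
    _ ≤ ∑ k, cc * |u k| :=
        Finset.sum_le_sum fun k _ => mul_le_mul_of_nonneg_right (hcol k) (abs_nonneg _)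
    _ = cc * ∑ k, |u k| := by rw [Finset.mul_sum]

lemma l1_mulVec_le_inf {a b : ℕ} (A : Matrix (Fin a) (Fin b) ℝ) (u : Fin b → ℝ) (S : ℝ)
    (htot : ∑ j, ∑ k, |A j k| ≤ S) (hu : ∀ k, |u k| ≤ 1) :
    ∑ j, |A.mulVec u j| ≤ S := by
  calc ∑ j, |A.mulVec u j| ≤ ∑ j, ∑ k, |A j k| * |u k| := by
        refine Finset.sum_le_sum fun j _ => ?_
        simp only [Matrix.mulVec, dotProduct]
        refine le_trans (Finset.abs_sum_le_sum_abs _ _) ?_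
        simp [abs_mul]
    _ ≤ ∑ j, ∑ k, |A j k| := by
        refine Finset.sum_le_sum fun j _ => Finset.sum_le_sum fun k _ => ?_
        calc |A j k| * |u k| ≤ |A j k| * 1 := mul_le_mul_of_nonneg_left (hu k) (abs_nonneg _)
          _ = |A j k| := mul_one _
    _ ≤ S := htot

lemma nnz_totsum {a b : ℕ} (A : Matrix (Fin a) (Fin b) ℝ) (E : ℝ) (hE0 : 0 ≤ E) (r : ℕ)
    (hE : ∀ j k, |A j k| ≤ E) (hr : nnz A ≤ r) :
    ∑ j, ∑ k, |A j k| ≤ (r : ℝ) * E := by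
  classical
  have hcard : nnz A = (Finset.univ.filter (fun p : Fin a × Fin b => A p.1 p.2 ≠ 0)).card := by
    rw [nnz, Nat.card_eq_fintype_card, Fintype.card_subtype]
  have h1 : ∑ j, ∑ k, |A j k| = ∑ p : Fin a × Fin b, |A p.1 p.2| := by
    rw [← Finset.univ_product_univ, Finset.sum_product]
  have h2 : ∑ p : Fin a × Fin b, |A p.1 p.2|
      = ∑ p ∈ Finset.univ.filter (fun p : Fin a × Fin b => A p.1 p.2 ≠ 0), |A p.1 p.2| := by
    refine (Finset.sum_filter_of_ne ?_).symm
    intro p _ hp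
    exact fun h0 => hp (by simp [h0])
  rw [h1, h2]
  calc ∑ p ∈ Finset.univ.filter (fun p : Fin a × Fin b => A p.1 p.2 ≠ 0), |A p.1 p.2|
      ≤ (Finset.univ.filter (fun p : Fin a × Fin b => A p.1 p.2 ≠ 0)).card • E :=
        Finset.sum_le_card_nsmul _ _ _ (fun p _ => hE p.1 p.2)
    _ = ((Finset.univ.filter (fun p : Fin a × Fin b => A p.1 p.2 ≠ 0)).card : ℝ) * E := by
        rw [nsmul_eq_mul]
    _ ≤ (r : ℝ) * E := by
        refine mul_le_mul_of_nonneg_right ?_ hE0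
        exact_mod_cast hcard ▸ hr

lemma choose_le_pow_nat : ∀ (h t : ℕ), 1 ≤ t → (t + h - 1).choose h ≤ t ^ h := by
  intro h
  induction h with
  | zero => intro t ht; simp
  | succ n ih =>
      intro t ht
      have h2 : t + (n + 1) - 1 = (t + n - 1) + 1 := by omega
      rw [h2]
      have key : (t + n - 1 + 1) * ((t + n - 1).choose n)
          = ((t + n - 1) + 1).choose (n + 1) * (n + 1) := Nat.add_one_mul_choose_eq (t + n - 1) n
      have h3 : t + n - 1 + 1 = t + n := by omega
      rw [h3] at key
      rw [h3]
      have hle : (t + n).choose (n + 1) * (n + 1) ≤ (t * (t + n - 1).choose n) * (n + 1) := by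
        rw [← key]
        have : t + n ≤ t * (n + 1) := by nlinarith
        calc (t + n) * ((t + n - 1).choose n) ≤ (t * (n + 1)) * ((t + n - 1).choose n) :=
              Nat.mul_le_mul_right _ this
          _ = (t * (t + n - 1).choose n) * (n + 1) := by ring
      have h4 := Nat.le_of_mul_le_mul_right hle (by omega : 0 < n + 1)
      calc (t + n).choose (n + 1) ≤ t * (t + n - 1).choose n := h4
        _ ≤ t * t ^ n := Nat.mul_le_mul_left _ (ih t ht)
        _ = t ^ (n + 1) := by ring

lemma l1_mulVec_diff_le {a b : ℕ} (A A' : Matrix (Fin a) (Fin b) ℝ) (u u' : Fin b → ℝ)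
    (δ cc : ℝ) (hδ : ∀ j k, |A j k - A' j k| ≤ δ)
    (hcol : ∀ k, ∑ j, |A' j k| ≤ cc) :
    ∑ j, |A.mulVec u j - A'.mulVec u' j|
      ≤ (δ * a) * ∑ k, |u k| + cc * ∑ k, |u k - u' k| := by
  have h1 : ∀ j, A.mulVec u j - A'.mulVec u' j
      = (A - A').mulVec u j + A'.mulVec (u - u') j := by
    intro j
    have e1 : (A - A').mulVec u = A.mulVec u - A'.mulVec u := Matrix.sub_mulVec A A' u
    have e2 : A'.mulVec (u - u') = A'.mulVec u - A'.mulVec u' := Matrix.mulVec_sub A' u u'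
    rw [e1, e2]; simp
  calc ∑ j, |A.mulVec u j - A'.mulVec u' j|
      ≤ ∑ j, (|(A - A').mulVec u j| + |A'.mulVec (u - u') j|) := by
        refine Finset.sum_le_sum fun j _ => ?_
        rw [h1 j]; exact abs_add_le _ _
    _ = (∑ j, |(A - A').mulVec u j|) + ∑ j, |A'.mulVec (u - u') j| := Finset.sum_add_distrib
    _ ≤ (δ * a) * ∑ k, |u k| + cc * ∑ k, |u k - u' k| := by
        refine add_le_add ?_ ?_
        · refine l1_mulVec_le _ _ (δ * a) ?_
          intro k
          calc ∑ j, |(A - A') j k| ≤ ∑ _j : Fin a, δ := by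
                refine Finset.sum_le_sum fun j _ => ?_
                simpa [Matrix.sub_apply] using hδ j k
            _ = (a : ℝ) * δ := by simp [mul_comm]
            _ = δ * a := by ring
        · refine le_trans (l1_mulVec_le _ _ cc hcol) ?_
          simp [Pi.sub_apply]

lemma one_le_prod_real {s : Finset ℕ} {f : ℕ → ℝ} (h : ∀ k ∈ s, 1 ≤ f k) :
    1 ≤ ∏ k ∈ s, f k :=
  Finset.prod_induction f (fun r => 1 ≤ r) (fun a b ha hb => by nlinarith) le_rfl h

lemma single_le_prod_real {s : Finset ℕ} {f : ℕ → ℝ} (h : ∀ k ∈ s, 1 ≤ f k) {a : ℕ}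
    (ha : a ∈ s) : f a ≤ ∏ k ∈ s, f k := by
  rw [← Finset.mul_prod_erase s f ha]
  have h1 : 1 ≤ ∏ k ∈ s.erase a, f k :=
    one_le_prod_real (fun k hk => h k (Finset.mem_of_mem_erase hk))
  nlinarith [h a ha]

lemma combS_real {a cg b D Pp Pg C1 C2 C3 E1 X Y : ℝ}
    (ha : 0 ≤ a) (hac : a ≤ cg) (hb : 0 ≤ b) (hbD : b ≤ D)
    (hPp : 0 ≤ Pp) (hPg : Pg = Pp * cg)
    (hC3 : C1 + C2 ≤ C3) (hC1 : 0 ≤ C1) (hC2 : 0 ≤ C2)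
    (hE1 : 0 ≤ E1) (hD : 0 ≤ D)
    (hX0 : 0 ≤ X) (hY0 : 0 ≤ Y)
    (hX : X ≤ Pp * C1 * (D * E1)) (hY : Y ≤ Pg * C2 * E1) :
    a * X + b * Y ≤ Pg * C3 * (D * E1) := by
  have hc : 0 ≤ cg := le_trans ha hac
  have hPg0 : 0 ≤ Pg := by rw [hPg]; exact mul_nonneg hPp hc
  have h1 : a * X ≤ cg * (Pp * C1 * (D * E1)) := mul_le_mul hac hX hX0 hc
  have h1' : cg * (Pp * C1 * (D * E1)) = Pg * C1 * (D * E1) := by rw [hPg]; ring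
  have h2 : b * Y ≤ D * (Pg * C2 * E1) := mul_le_mul hbD hY hY0 hD
  have h2' : D * (Pg * C2 * E1) = Pg * C2 * (D * E1) := by ring
  have h3 : Pg * C1 * (D * E1) + Pg * C2 * (D * E1) ≤ Pg * C3 * (D * E1) := by
    have e : Pg * C1 * (D * E1) + Pg * C2 * (D * E1) = Pg * (C1 + C2) * (D * E1) := by ring
    rw [e]
    exact mul_le_mul_of_nonneg_right (mul_le_mul_of_nonneg_left hC3 hPg0)
      (mul_nonneg hD hE1)
  linarith

lemma combT_real {Lg cg dg D Pp Pg Np Ng C1 C2 σ τ E1 X Y XD YD δ : ℝ} (n : ℕ)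
    (hδ : 0 ≤ δ) (hLg : 0 ≤ Lg) (hNp : 0 ≤ Np) (hNg : Ng = Np + Lg)
    (hcg : 0 ≤ cg) (hPp : 0 ≤ Pp) (hPg : Pg = Pp * cg) (hPpPg : Pp ≤ Pg)
    (hdD : dg ≤ D) (hdg : 0 ≤ dg) (hD : 1 ≤ D) (hE1 : 0 ≤ E1)
    (hστ : σ = τ + 1) (hτ : 0 ≤ τ)
    (hX0 : 0 ≤ X) (hY0 : 0 ≤ Y) (hXD0 : 0 ≤ XD) (hYD0 : 0 ≤ YD)
    (hC1 : 0 ≤ C1) (hC2 : 0 ≤ C2)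
    (hX : X ≤ Pp * C1 * (D * E1))
    (hY : Y ≤ Pg * C2 * E1)
    (hCt : C1 + C2 ≤ σ ^ n)
    (hXD : XD ≤ δ * Np * σ ^ n * Pp * (D * E1))
    (hYD : YD ≤ δ * Ng * τ ^ (n + 1) * Pg * E1) :
    (δ * Lg) * X + cg * XD + ((δ * Lg) * Y + dg * YD)
      ≤ δ * Ng * σ ^ (n + 1) * Pg * (D * E1) := by
  have hNg0 : 0 ≤ Ng := by rw [hNg]; linarith
  have hPg0 : 0 ≤ Pg := le_trans hPp hPpPg
  have hσ : 0 ≤ σ := by rw [hστ]; linarith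
  have hδL : 0 ≤ δ * Lg := mul_nonneg hδ hLg
  have hDE : 0 ≤ D * E1 := mul_nonneg (by linarith) hE1
  have e1 : (δ * Lg) * X ≤ (δ * Lg) * (Pg * C1 * (D * E1)) := by
    refine mul_le_mul_of_nonneg_left (le_trans hX ?_) hδL
    exact mul_le_mul_of_nonneg_right (mul_le_mul_of_nonneg_right hPpPg hC1) hDE
  have e2 : (δ * Lg) * Y ≤ (δ * Lg) * (Pg * C2 * (D * E1)) := by
    refine mul_le_mul_of_nonneg_left (le_trans hY ?_) hδL
    have h9 : E1 ≤ D * E1 := by nlinarith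
    exact mul_le_mul_of_nonneg_left h9 (mul_nonneg hPg0 hC2)
  have e3 : cg * XD ≤ δ * Np * σ ^ n * Pg * (D * E1) := by
    calc cg * XD ≤ cg * (δ * Np * σ ^ n * Pp * (D * E1)) :=
          mul_le_mul_of_nonneg_left hXD hcg
      _ = δ * Np * σ ^ n * (Pp * cg) * (D * E1) := by ring
      _ = δ * Np * σ ^ n * Pg * (D * E1) := by rw [hPg]
  have e4 : dg * YD ≤ δ * Ng * τ ^ (n + 1) * Pg * (D * E1) := by
    calc dg * YD ≤ D * (δ * Ng * τ ^ (n + 1) * Pg * E1) := mul_le_mul hdD hYD hYD0 (by linarith)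
      _ = δ * Ng * τ ^ (n + 1) * Pg * (D * E1) := by ring
  have hτσn : τ ^ n ≤ σ ^ n := pow_le_pow_left₀ hτ (by linarith) n
  have hcoeff : Lg * C1 + Lg * C2 + Np * σ ^ n + Ng * τ ^ (n + 1) ≤ Ng * σ ^ (n + 1) := by
    have h5 : Ng * τ ^ (n + 1) ≤ Ng * (τ * σ ^ n) := by
      rw [pow_succ]
      have : τ ^ n * τ ≤ σ ^ n * τ := mul_le_mul_of_nonneg_right hτσn hτ
      nlinarith
    have h6 : Lg * C1 + Lg * C2 ≤ Lg * σ ^ n := by nlinarith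
    have h7 : Ng * σ ^ (n + 1) = Lg * σ ^ n + Np * σ ^ n + Ng * (τ * σ ^ n) := by
      rw [hNg, hστ, pow_succ]; ring
    linarith
  have hmul : (Lg * C1 + Lg * C2 + Np * σ ^ n + Ng * τ ^ (n + 1)) * (δ * (Pg * (D * E1)))
      ≤ (Ng * σ ^ (n + 1)) * (δ * (Pg * (D * E1))) :=
    mul_le_mul_of_nonneg_right hcoeff (mul_nonneg hδ (mul_nonneg hPg0 hDE))
  have expand : (Lg * C1 + Lg * C2 + Np * σ ^ n + Ng * τ ^ (n + 1)) * (δ * (Pg * (D * E1)))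
      = (δ * Lg) * (Pg * C1 * (D * E1)) + (δ * Lg) * (Pg * C2 * (D * E1))
        + δ * Np * σ ^ n * Pg * (D * E1) + δ * Ng * τ ^ (n + 1) * Pg * (D * E1) := by ring
  have expand2 : (Ng * σ ^ (n + 1)) * (δ * (Pg * (D * E1)))
      = δ * Ng * σ ^ (n + 1) * Pg * (D * E1) := by ring
  linarith

lemma combT1_real {L1 L0 dg D P1 N1 τ σ E1 Y YD δ W : ℝ}
    (hδ : 0 ≤ δ) (hL1 : 0 ≤ L1) (hL0 : 0 ≤ L0)
    (hN1 : N1 = L0 * L1 + L1) (hP1 : 1 ≤ P1)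
    (hdD : dg ≤ D) (hdg : 0 ≤ dg) (hD : 1 ≤ D) (hE1 : 1 ≤ E1)
    (hστ : σ = τ + 1) (hτ : 0 ≤ τ)
    (hY0 : 0 ≤ Y) (hYD0 : 0 ≤ YD)
    (hW : W ≤ δ * (L1 * L0))
    (hY : Y ≤ P1 * τ * E1)
    (hYD : YD ≤ δ * N1 * τ ^ 2 * P1 * E1) :
    W + ((δ * L1) * Y + dg * YD) ≤ δ * N1 * σ ^ 2 * P1 * (D * E1) := by
  have hP10 : 0 ≤ P1 := by linarith
  have hN10 : 0 ≤ N1 := by nlinarith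
  have hE10 : 0 ≤ E1 := by linarith
  have hDE1 : 1 ≤ D * E1 := by nlinarith
  have hDE0 : 0 ≤ D * E1 := by linarith
  have e1 : W ≤ δ * (L1 * L0) * (P1 * (D * E1)) := by
    have h1 : (1:ℝ) ≤ P1 * (D * E1) := by nlinarith
    nlinarith [mul_nonneg hδ (mul_nonneg hL1 hL0)]
  have e2 : (δ * L1) * Y ≤ δ * L1 * (P1 * τ * (D * E1)) := by
    refine mul_le_mul_of_nonneg_left (le_trans hY ?_) (mul_nonneg hδ hL1)
    have : E1 ≤ D * E1 := by nlinarith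
    exact mul_le_mul_of_nonneg_left this (mul_nonneg hP10 hτ)
  have e3 : dg * YD ≤ δ * N1 * τ ^ 2 * P1 * (D * E1) := by
    calc dg * YD ≤ D * (δ * N1 * τ ^ 2 * P1 * E1) := mul_le_mul hdD hYD hYD0 (by linarith)
      _ = δ * N1 * τ ^ 2 * P1 * (D * E1) := by ring
  have hcoeff : L1 * L0 + L1 * τ + N1 * τ ^ 2 ≤ N1 * σ ^ 2 := by
    rw [hστ, hN1]
    nlinarith [mul_nonneg hL1 hτ, mul_nonneg (mul_nonneg hL0 hL1) hτ,
      mul_nonneg (mul_nonneg hL0 hL1) (mul_nonneg hτ hτ), sq_nonneg τ]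
  have hmul : (L1 * L0 + L1 * τ + N1 * τ ^ 2) * (δ * (P1 * (D * E1)))
      ≤ (N1 * σ ^ 2) * (δ * (P1 * (D * E1))) :=
    mul_le_mul_of_nonneg_right hcoeff (mul_nonneg hδ (mul_nonneg hP10 hDE0))
  have expand : (L1 * L0 + L1 * τ + N1 * τ ^ 2) * (δ * (P1 * (D * E1)))
      = δ * (L1 * L0) * (P1 * (D * E1)) + δ * L1 * (P1 * τ * (D * E1))
        + δ * N1 * τ ^ 2 * P1 * (D * E1) := by ring
  have expand2 : (N1 * σ ^ 2) * (δ * (P1 * (D * E1))) = δ * N1 * σ ^ 2 * P1 * (D * E1) := by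
    ring
  linarith

lemma baseS_real {a cg Pp Pg X : ℝ} (ha : 0 ≤ a) (hac : a ≤ cg) (hPp : 0 ≤ Pp)
    (hPg : Pg = Pp * cg) (hX0 : 0 ≤ X) (hX : X ≤ Pp) : a * X ≤ Pg := by
  calc a * X ≤ cg * Pp := mul_le_mul hac hX hX0 (le_trans ha hac)
    _ = Pg := by rw [hPg]; ring

lemma baseT_real {Lg cg Pp Pg Np Ng X XD δ : ℝ}
    (hδ : 0 ≤ δ) (hLg : 0 ≤ Lg) (hNp : 0 ≤ Np) (hNg : Ng = Np + Lg)
    (hPp : 0 ≤ Pp) (hPg : Pg = Pp * cg) (hcg : 1 ≤ cg)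
    (hX0 : 0 ≤ X) (hXD0 : 0 ≤ XD) (hX : X ≤ Pp) (hXD : XD ≤ δ * Np * Pp) :
    (δ * Lg) * X + cg * XD ≤ δ * Ng * Pg := by
  have hPpPg : Pp ≤ Pg := by rw [hPg]; nlinarith
  have e1 : (δ * Lg) * X ≤ (δ * Lg) * Pg :=
    mul_le_mul_of_nonneg_left (le_trans hX hPpPg) (mul_nonneg hδ hLg)
  have e2 : cg * XD ≤ δ * Np * Pg := by
    calc cg * XD ≤ cg * (δ * Np * Pp) := mul_le_mul_of_nonneg_left hXD (by linarith)
      _ = δ * Np * (Pp * cg) := by ring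
      _ = δ * Np * Pg := by rw [hPg]
  have : (δ * Lg) * Pg + δ * Np * Pg = δ * Ng * Pg := by rw [hNg]; ring
  linarith

lemma final_real {LH cH Pp PH Np NH σ E1 X XD C1 δ : ℝ} (n : ℕ)
    (hδ : 0 ≤ δ) (hLH : 0 ≤ LH) (hNp : 0 ≤ Np) (hNH : NH = Np + LH)
    (hPp : 0 ≤ Pp) (hPH : PH = Pp * cH) (hcH : 1 ≤ cH)
    (hσ : 1 ≤ σ) (hE1 : 0 ≤ E1)
    (hX0 : 0 ≤ X) (hXD0 : 0 ≤ XD)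
    (hC1 : 0 ≤ C1) (hC1σ : C1 ≤ σ ^ n)
    (hX : X ≤ Pp * C1 * E1)
    (hXD : XD ≤ δ * Np * σ ^ (n + 1) * Pp * E1) :
    (δ * LH) * X + cH * XD ≤ σ ^ (n + 1) * δ * NH * PH * E1 := by
  have hPpPH : Pp ≤ PH := by rw [hPH]; nlinarith
  have hPH0 : 0 ≤ PH := le_trans hPp hPpPH
  have hσn : C1 ≤ σ ^ (n + 1) :=
    le_trans hC1σ (pow_le_pow_right₀ hσ (Nat.le_succ n))
  have e1 : (δ * LH) * X ≤ (δ * LH) * (PH * σ ^ (n + 1) * E1) := by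
    refine mul_le_mul_of_nonneg_left (le_trans hX ?_) (mul_nonneg hδ hLH)
    refine mul_le_mul_of_nonneg_right ?_ hE1
    exact mul_le_mul hPpPH hσn hC1 hPH0
  have e2 : cH * XD ≤ δ * Np * σ ^ (n + 1) * PH * E1 := by
    calc cH * XD ≤ cH * (δ * Np * σ ^ (n + 1) * Pp * E1) :=
          mul_le_mul_of_nonneg_left hXD (by linarith)
      _ = δ * Np * σ ^ (n + 1) * (Pp * cH) * E1 := by ring
      _ = δ * Np * σ ^ (n + 1) * PH * E1 := by rw [hPH]
  have expand : (δ * LH) * (PH * σ ^ (n + 1) * E1) + δ * Np * σ ^ (n + 1) * PH * E1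
      = σ ^ (n + 1) * δ * NH * PH * E1 := by rw [hNH]; ring
  linarith
/-- Lemma (output difference between a sparse RNN `β' = (w, v)` with `nnz(w^h) ≤ r_{w_h}`,
`nnz(v^h) ≤ r_{v_h}` and entries bounded by `E' ≥ 1`, and an arbitrary RNN `β̃ = (w', v')`
with `|β'_j - β̃_j| ≤ δ₂` for every index `j`): for every `t ≥ 1`,
`∑_j |O_t(β')(j) - O_t(β̃)(j)| ≤ t^H δ₂ (p L₁ + Σ_{k=1}^H L_k)
  (∏_{k=1}^H [δ₂ L_k + r_{w_k} E']) (∏_{k=1}^{H-1} [δ₂ L_k + r_{v_k} E'])^{t-1}`. -/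
theorem output_diff_bound_dense_perturbation
    (H : ℕ) (hH : 2 ≤ H)
    (L : ℕ → ℕ) (hL : ∀ h ≤ H, 1 ≤ L h)
    (w w' : (h : ℕ) → Matrix (Fin (L h)) (Fin (L (h - 1))) ℝ)
    (v v' : (h : ℕ) → Matrix (Fin (L h)) (Fin (L h)) ℝ)
    (ψ : ℕ → ℝ → ℝ)
    (hψ : ∀ h, 1 ≤ h → h ≤ H - 1 → LipschitzWith 1 (ψ h) ∧ ψ h 0 = 0)
    (x : ℕ → Fin (L 0) → ℝ) (hx : ∀ s j, |x s j| ≤ 1)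
    (E' : ℝ) (hE' : 1 ≤ E')
    (rw rv : ℕ → ℕ)
    (hrw : ∀ h, 1 ≤ h → h ≤ H → 1 ≤ rw h) (hrv : ∀ h, 1 ≤ h → h ≤ H - 1 → 1 ≤ rv h)
    (hwE : ∀ h, 1 ≤ h → h ≤ H → ∀ j k, |w h j k| ≤ E')
    (hvE : ∀ h, 1 ≤ h → h ≤ H - 1 → ∀ j k, |v h j k| ≤ E')
    (hwr : ∀ h, 1 ≤ h → h ≤ H → nnz (w h) ≤ rw h)
    (hvr : ∀ h, 1 ≤ h → h ≤ H - 1 → nnz (v h) ≤ rv h)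
    (δ₂ : ℝ) (hδ₂ : 0 ≤ δ₂)
    (hwclose : ∀ h, 1 ≤ h → h ≤ H → ∀ j k, |w h j k - w' h j k| ≤ δ₂)
    (hvclose : ∀ h, 1 ≤ h → h ≤ H - 1 → ∀ j k, |v h j k - v' h j k| ≤ δ₂)
    (t : ℕ) (ht : 1 ≤ t) :
    ∑ j, |output L H w v ψ x t j - output L H w' v' ψ x t j| ≤
      (t : ℝ) ^ H * δ₂ * ((L 0 : ℝ) * (L 1 : ℝ) + ∑ k ∈ Finset.Icc 1 H, (L k : ℝ))
        * (∏ k ∈ Finset.Icc 1 H, (δ₂ * (L k : ℝ) + (rw k : ℝ) * E'))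
        * (∏ k ∈ Finset.Icc 1 (H - 1), (δ₂ * (L k : ℝ) + (rv k : ℝ) * E')) ^ (t - 1) := by
  have hE0 : (0:ℝ) ≤ E' := by linarith
  have hLr : ∀ k, k ≤ H → (1:ℝ) ≤ (L k : ℝ) := fun k hk => by exact_mod_cast hL k hk
  have hL0r : ∀ k, (0:ℝ) ≤ (L k : ℝ) := fun k => Nat.cast_nonneg _
  have hcge1 : ∀ k, 1 ≤ k → k ≤ H → (1:ℝ) ≤ δ₂ * (L k:ℝ) + (rw k:ℝ) * E' := by
    intro k h1 h2
    have h3 : (1:ℝ) ≤ (rw k:ℝ) := by exact_mod_cast hrw k h1 h2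
    nlinarith [mul_nonneg hδ₂ (hL0r k)]
  have hdge1 : ∀ k, 1 ≤ k → k ≤ H - 1 → (1:ℝ) ≤ δ₂ * (L k:ℝ) + (rv k:ℝ) * E' := by
    intro k h1 h2
    have h3 : (1:ℝ) ≤ (rv k:ℝ) := by exact_mod_cast hrv k h1 h2
    nlinarith [mul_nonneg hδ₂ (hL0r k)]
  obtain ⟨P, hPdef⟩ : ∃ P : ℕ → ℝ,
      P = fun h => ∏ k ∈ Finset.Icc 1 h, (δ₂ * (L k:ℝ) + (rw k:ℝ) * E') := ⟨_, rfl⟩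
  obtain ⟨N, hNdef⟩ : ∃ N : ℕ → ℝ,
      N = fun h => (L 0:ℝ) * (L 1:ℝ) + ∑ k ∈ Finset.Icc 1 h, (L k:ℝ) := ⟨_, rfl⟩
  obtain ⟨D, hDdef⟩ : ∃ D : ℝ,
      D = ∏ k ∈ Finset.Icc 1 (H-1), (δ₂ * (L k:ℝ) + (rv k:ℝ) * E') := ⟨_, rfl⟩
  have hP0 : P 0 = 1 := by rw [hPdef]; simp
  have hPsucc : ∀ m, P (m+1) = P m * (δ₂ * (L (m+1):ℝ) + (rw (m+1):ℝ) * E') := by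
    intro m; rw [hPdef]
    exact Finset.prod_Icc_succ_top (by omega) _
  have hPone : ∀ h, h ≤ H → (1:ℝ) ≤ P h := by
    intro h hh; rw [hPdef]
    refine one_le_prod_real ?_
    intro k hk
    rw [Finset.mem_Icc] at hk
    exact hcge1 k hk.1 (le_trans hk.2 hh)
  have hPnn : ∀ h, h ≤ H → (0:ℝ) ≤ P h := fun h hh => le_trans zero_le_one (hPone h hh)
  have hD1 : (1:ℝ) ≤ D := by
    rw [hDdef]
    refine one_le_prod_real ?_
    intro k hk; rw [Finset.mem_Icc] at hk
    exact hdge1 k hk.1 hk.2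
  have hDt : ∀ n : ℕ, (1:ℝ) ≤ D ^ n := fun n => one_le_pow₀ hD1
  have hDtnn : ∀ n : ℕ, (0:ℝ) ≤ D ^ n := fun n => le_trans zero_le_one (hDt n)
  have hdD : ∀ k, 1 ≤ k → k ≤ H - 1 → δ₂ * (L k:ℝ) + (rv k:ℝ) * E' ≤ D := by
    intro k h1 h2; rw [hDdef]
    exact single_le_prod_real (f := fun k => δ₂ * (L k:ℝ) + (rv k:ℝ) * E')
      (fun i hi => by
        rw [Finset.mem_Icc] at hi
        exact hdge1 i hi.1 hi.2) (Finset.mem_Icc.mpr ⟨h1, h2⟩)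
  have hNsucc : ∀ m, N (m+1) = N m + (L (m+1):ℝ) := by
    intro m; rw [hNdef]; simp only
    rw [Finset.sum_Icc_succ_top (by omega : 1 ≤ m+1)]; ring
  have hN1 : N 1 = (L 0:ℝ) * (L 1:ℝ) + (L 1:ℝ) := by
    rw [hNdef]; simp
  have hNnn : ∀ h, 0 ≤ N h := by
    intro h; rw [hNdef]; simp only
    have h1 : (0:ℝ) ≤ ∑ k ∈ Finset.Icc 1 h, (L k:ℝ) := Finset.sum_nonneg fun k _ => hL0r k
    nlinarith [mul_nonneg (hL0r 0) (hL0r 1)]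
  -- matrix sum bounds
  have hwtot : ∀ g, 1 ≤ g → g ≤ H → ∑ j, ∑ k, |w g j k| ≤ (rw g:ℝ) * E' :=
    fun g h1 h2 => nnz_totsum (w g) E' hE0 (rw g) (hwE g h1 h2) (hwr g h1 h2)
  have hvtot : ∀ g, 1 ≤ g → g ≤ H - 1 → ∑ j, ∑ k, |v g j k| ≤ (rv g:ℝ) * E' :=
    fun g h1 h2 => nnz_totsum (v g) E' hE0 (rv g) (hvE g h1 h2) (hvr g h1 h2)
  have hwcol : ∀ g, 1 ≤ g → g ≤ H → ∀ k, ∑ j, |w g j k| ≤ (rw g:ℝ) * E' := by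
    intro g h1 h2 k
    refine le_trans ?_ (hwtot g h1 h2)
    exact Finset.sum_le_sum fun j _ =>
      Finset.single_le_sum (f := fun k' => |w g j k'|) (fun k' _ => abs_nonneg _)
        (Finset.mem_univ k)
  have hvcol : ∀ g, 1 ≤ g → g ≤ H - 1 → ∀ k, ∑ j, |v g j k| ≤ (rv g:ℝ) * E' := by
    intro g h1 h2 k
    refine le_trans ?_ (hvtot g h1 h2)
    exact Finset.sum_le_sum fun j _ =>
      Finset.single_le_sum (f := fun k' => |v g j k'|) (fun k' _ => abs_nonneg _)
        (Finset.mem_univ k)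
  have hw'col : ∀ g, 1 ≤ g → g ≤ H → ∀ k,
      ∑ j, |w' g j k| ≤ δ₂ * (L g:ℝ) + (rw g:ℝ) * E' := by
    intro g h1 h2 k
    have h3 : ∑ j, |w' g j k| ≤ ∑ j, (|w g j k| + δ₂) := by
      refine Finset.sum_le_sum fun j _ => ?_
      have h4 := hwclose g h1 h2 j k
      have h5 : |w' g j k| - |w g j k| ≤ |w' g j k - w g j k| := abs_sub_abs_le_abs_sub _ _
      rw [abs_sub_comm] at h5
      linarith
    rw [Finset.sum_add_distrib, Finset.sum_const, Finset.card_univ, Fintype.card_fin,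
      nsmul_eq_mul] at h3
    have h6 := hwcol g h1 h2 k
    have h7 : ((L g:ℕ):ℝ) * δ₂ = δ₂ * (L g:ℝ) := by ring
    linarith
  have hv'col : ∀ g, 1 ≤ g → g ≤ H - 1 → ∀ k,
      ∑ j, |v' g j k| ≤ δ₂ * (L g:ℝ) + (rv g:ℝ) * E' := by
    intro g h1 h2 k
    have h3 : ∑ j, |v' g j k| ≤ ∑ j, (|v g j k| + δ₂) := by
      refine Finset.sum_le_sum fun j _ => ?_
      have h4 := hvclose g h1 h2 j k
      have h5 : |v' g j k| - |v g j k| ≤ |v' g j k - v g j k| := abs_sub_abs_le_abs_sub _ _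
      rw [abs_sub_comm] at h5
      linarith
    rw [Finset.sum_add_distrib, Finset.sum_const, Finset.card_univ, Fintype.card_fin,
      nsmul_eq_mul] at h3
    have h6 := hvcol g h1 h2 k
    have h7 : ((L g:ℕ):ℝ) * δ₂ = δ₂ * (L g:ℝ) := by ring
    linarith
  -- Lipschitz facts
  have hlips : ∀ g, 1 ≤ g → g ≤ H - 1 → ∀ u u' : ℝ, |ψ g u - ψ g u'| ≤ |u - u'| := by
    intro g h1 h2 u u'
    have h3 := (hψ g h1 h2).1.dist_le_mul u u'
    simpa [Real.dist_eq] using h3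
  have hlip0 : ∀ g, 1 ≤ g → g ≤ H - 1 → ∀ u : ℝ, |ψ g u| ≤ |u| := by
    intro g h1 h2 u
    have h3 := hlips g h1 h2 u 0
    simpa [(hψ g h1 h2).2] using h3
  -- unfolding facts
  have hstate : ∀ τ m (j : Fin (L (m+1))),
      hiddenState L w v ψ x (τ+1) (m+1) j
        = ψ (m+1) ((w (m+1)).mulVec (hiddenState L w v ψ x (τ+1) m) j
            + (v (m+1)).mulVec (hiddenState L w v ψ x τ (m+1)) j) := fun τ m j => rfl
  have hstate' : ∀ τ m (j : Fin (L (m+1))),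
      hiddenState L w' v' ψ x (τ+1) (m+1) j
        = ψ (m+1) ((w' (m+1)).mulVec (hiddenState L w' v' ψ x (τ+1) m) j
            + (v' (m+1)).mulVec (hiddenState L w' v' ψ x τ (m+1)) j) := fun τ m j => rfl
  have hx0 : ∀ τ, hiddenState L w v ψ x (τ+1) 0 = x (τ+1) := fun τ => rfl
  have hx0' : ∀ τ, hiddenState L w' v' ψ x (τ+1) 0 = x (τ+1) := fun τ => rfl
  have hz0 : ∀ g (j : Fin (L g)), hiddenState L w v ψ x 0 g j = 0 := fun g j => rfl
  have hz0' : ∀ g (j : Fin (L g)), hiddenState L w' v' ψ x 0 g j = 0 := fun g j => rfl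
  -- recursions
  have recW : ∀ τ m, m + 1 ≤ H - 1 →
      ∑ j, |hiddenState L w v ψ x (τ+1) (m+1) j|
        ≤ (∑ j, |(w (m+1)).mulVec (hiddenState L w v ψ x (τ+1) m) j|)
          + ∑ j, |(v (m+1)).mulVec (hiddenState L w v ψ x τ (m+1)) j| := by
    intro τ m hm
    have h1 : ∀ j, |hiddenState L w v ψ x (τ+1) (m+1) j|
        ≤ |(w (m+1)).mulVec (hiddenState L w v ψ x (τ+1) m) j|
          + |(v (m+1)).mulVec (hiddenState L w v ψ x τ (m+1)) j| := by
      intro j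
      rw [hstate τ m j]
      exact le_trans (hlip0 (m+1) (by omega) hm _) (abs_add_le _ _)
    refine le_trans (Finset.sum_le_sum fun j _ => h1 j) ?_
    rw [Finset.sum_add_distrib]
  have recD : ∀ τ m, m + 1 ≤ H - 1 →
      ∑ j, |hiddenState L w v ψ x (τ+1) (m+1) j - hiddenState L w' v' ψ x (τ+1) (m+1) j|
        ≤ (∑ j, |(w (m+1)).mulVec (hiddenState L w v ψ x (τ+1) m) j
              - (w' (m+1)).mulVec (hiddenState L w' v' ψ x (τ+1) m) j|)
          + ∑ j, |(v (m+1)).mulVec (hiddenState L w v ψ x τ (m+1)) j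
              - (v' (m+1)).mulVec (hiddenState L w' v' ψ x τ (m+1)) j| := by
    intro τ m hm
    have h1 : ∀ j, |hiddenState L w v ψ x (τ+1) (m+1) j - hiddenState L w' v' ψ x (τ+1) (m+1) j|
        ≤ |(w (m+1)).mulVec (hiddenState L w v ψ x (τ+1) m) j
              - (w' (m+1)).mulVec (hiddenState L w' v' ψ x (τ+1) m) j|
          + |(v (m+1)).mulVec (hiddenState L w v ψ x τ (m+1)) j
              - (v' (m+1)).mulVec (hiddenState L w' v' ψ x τ (m+1)) j| := by
      intro j
      rw [hstate τ m j, hstate' τ m j]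
      refine le_trans (hlips (m+1) (by omega) hm _ _) ?_
      have e : ((w (m+1)).mulVec (hiddenState L w v ψ x (τ+1) m) j
            + (v (m+1)).mulVec (hiddenState L w v ψ x τ (m+1)) j)
          - ((w' (m+1)).mulVec (hiddenState L w' v' ψ x (τ+1) m) j
            + (v' (m+1)).mulVec (hiddenState L w' v' ψ x τ (m+1)) j)
          = ((w (m+1)).mulVec (hiddenState L w v ψ x (τ+1) m) j
              - (w' (m+1)).mulVec (hiddenState L w' v' ψ x (τ+1) m) j)
            + ((v (m+1)).mulVec (hiddenState L w v ψ x τ (m+1)) j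
              - (v' (m+1)).mulVec (hiddenState L w' v' ψ x τ (m+1)) j) := by ring
      rw [e]
      exact abs_add_le _ _
    refine le_trans (Finset.sum_le_sum fun j _ => h1 j) ?_
    rw [Finset.sum_add_distrib]
  have key : ∀ t g, 1 ≤ g → g ≤ H - 1 →
      (∑ j, |hiddenState L w v ψ x (t+1) g j|
          ≤ P g * (((t + g).choose g : ℕ) : ℝ) * D ^ t) ∧
      (∑ j, |hiddenState L w v ψ x (t+1) g j - hiddenState L w' v' ψ x (t+1) g j|
          ≤ δ₂ * N g * (((t + 1 : ℕ)) : ℝ) ^ (g + 1) * P g * D ^ t) := by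
    intro t
    induction t with
    | zero =>
        intro g
        induction g with
        | zero => intro h1 _; exact absurd h1 (by omega)
        | succ m ihm =>
            intro _ hgH
            have h1m1 : (1:ℕ) ≤ m + 1 := by omega
            have hm1H : m + 1 ≤ H - 1 := hgH
            have hm1HH : m + 1 ≤ H := by omega
            have hvz : ∑ j, |(v (m+1)).mulVec (hiddenState L w v ψ x 0 (m+1)) j| = 0 := by
              have hz : ∀ j, (v (m+1)).mulVec (hiddenState L w v ψ x 0 (m+1)) j = 0 := by
                intro j
                simp [Matrix.mulVec, dotProduct, hz0]
              simp [hz]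
            have hvz' : ∑ j, |(v (m+1)).mulVec (hiddenState L w v ψ x 0 (m+1)) j
                - (v' (m+1)).mulVec (hiddenState L w' v' ψ x 0 (m+1)) j| = 0 := by
              have hza : ∀ j, (v (m+1)).mulVec (hiddenState L w v ψ x 0 (m+1)) j = 0 := by
                intro j; simp [Matrix.mulVec, dotProduct, hz0]
              have hzb : ∀ j, (v' (m+1)).mulVec (hiddenState L w' v' ψ x 0 (m+1)) j = 0 := by
                intro j; simp [Matrix.mulVec, dotProduct, hz0']
              simp [hza, hzb]
            constructor
            · -- S base
              refine le_trans (recW 0 m hm1H) ?_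
              rw [hvz, add_zero]
              have htarg : P (m+1) * (((0 + (m+1)).choose (m+1) : ℕ) : ℝ) * D ^ 0 = P (m+1) := by
                rw [Nat.zero_add, Nat.choose_self]
                norm_num
              rw [htarg]
              rcases Nat.eq_zero_or_pos m with rfl | hm
              · have hw1 : ∑ j, |(w (0+1)).mulVec (hiddenState L w v ψ x (0+1) 0) j|
                    ≤ (rw (0+1):ℝ) * E' := by
                  rw [hx0 0]
                  exact l1_mulVec_le_inf _ _ _ (hwtot (0+1) (by omega) (by omega)) (hx _)
                refine le_trans hw1 ?_
                rw [hPsucc 0, hP0, one_mul]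
                have := mul_nonneg hδ₂ (hL0r (0+1))
                linarith
              · have hw2 : ∑ j, |(w (m+1)).mulVec (hiddenState L w v ψ x (0+1) m) j|
                    ≤ ((rw (m+1):ℝ) * E') * ∑ k, |hiddenState L w v ψ x (0+1) m k| :=
                  l1_mulVec_le _ _ _ (hwcol (m+1) h1m1 hm1HH)
                have hX := (ihm (by omega) (by omega)).1
                have hXs : ∑ k, |hiddenState L w v ψ x (0+1) m k| ≤ P m := by
                  refine le_trans hX (le_of_eq ?_)
                  rw [Nat.zero_add, Nat.choose_self]
                  norm_num
                refine le_trans hw2 ?_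
                exact baseS_real (mul_nonneg (Nat.cast_nonneg _) hE0)
                  (by nlinarith [mul_nonneg hδ₂ (hL0r (m+1))]) (hPnn m (by omega))
                  (hPsucc m) (Finset.sum_nonneg fun _ _ => abs_nonneg _) hXs
            · -- T base
              refine le_trans (recD 0 m hm1H) ?_
              rw [hvz', add_zero]
              have htarg : δ₂ * N (m+1) * (((0 + 1 : ℕ)) : ℝ) ^ (m+1+1) * P (m+1) * D ^ 0
                  = δ₂ * N (m+1) * P (m+1) := by norm_num
              rw [htarg]
              rcases Nat.eq_zero_or_pos m with rfl | hm
              · have hwd : ∑ j, |(w (0+1)).mulVec (hiddenState L w v ψ x (0+1) 0) j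
                      - (w' (0+1)).mulVec (hiddenState L w' v' ψ x (0+1) 0) j|
                    ≤ δ₂ * ((L (0+1):ℝ) * (L 0:ℝ)) := by
                  rw [hx0 0, hx0' 0]
                  have hsub : ∀ j, (w (0+1)).mulVec (x (0+1)) j - (w' (0+1)).mulVec (x (0+1)) j
                      = ((w (0+1)) - (w' (0+1))).mulVec (x (0+1)) j := by
                    intro j; rw [Matrix.sub_mulVec]; simp
                  calc ∑ j, |(w (0+1)).mulVec (x (0+1)) j - (w' (0+1)).mulVec (x (0+1)) j|
                      = ∑ j, |((w (0+1)) - (w' (0+1))).mulVec (x (0+1)) j| :=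
                        Finset.sum_congr rfl fun j _ => by rw [hsub j]
                    _ ≤ δ₂ * ((L (0+1):ℝ) * (L 0:ℝ)) := by
                        refine l1_mulVec_le_inf _ _ _ ?_ (hx _)
                        calc ∑ j, ∑ k, |((w (0+1)) - (w' (0+1))) j k|
                            ≤ ∑ _j : Fin (L (0+1)), ∑ _k : Fin (L 0), δ₂ := by
                              refine Finset.sum_le_sum fun j _ => Finset.sum_le_sum fun k _ => ?_
                              simpa [Matrix.sub_apply] using hwclose (0+1) (by omega) (by omega) j k
                          _ = δ₂ * ((L (0+1):ℝ) * (L 0:ℝ)) := by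
                              simp [Finset.sum_const, Finset.card_univ]
                              ring
                refine le_trans hwd ?_
                have hN1' : (L (0+1):ℝ) * (L 0:ℝ) ≤ N (0+1) := by
                  rw [show ((0:ℕ)+1) = 1 from rfl, hN1]
                  nlinarith [hL0r 0, hL0r 1, hLr 1 (by omega)]
                have hP11 := hPone (0+1) (by omega)
                calc δ₂ * ((L (0+1):ℝ) * (L 0:ℝ)) ≤ δ₂ * N (0+1) :=
                      mul_le_mul_of_nonneg_left hN1' hδ₂
                  _ = δ₂ * N (0+1) * 1 := by ring
                  _ ≤ δ₂ * N (0+1) * P (0+1) := by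
                      refine mul_le_mul_of_nonneg_left hP11 ?_
                      exact mul_nonneg hδ₂ (hNnn _)
              · have hwd : ∑ j, |(w (m+1)).mulVec (hiddenState L w v ψ x (0+1) m) j
                      - (w' (m+1)).mulVec (hiddenState L w' v' ψ x (0+1) m) j|
                    ≤ (δ₂ * (L (m+1):ℝ)) * ∑ k, |hiddenState L w v ψ x (0+1) m k|
                      + (δ₂ * (L (m+1):ℝ) + (rw (m+1):ℝ) * E')
                        * ∑ k, |hiddenState L w v ψ x (0+1) m k
                            - hiddenState L w' v' ψ x (0+1) m k| :=
                  l1_mulVec_diff_le _ _ _ _ δ₂ _ (hwclose (m+1) h1m1 hm1HH)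
                    (hw'col (m+1) h1m1 hm1HH)
                refine le_trans hwd ?_
                have hX := (ihm (by omega) (by omega)).1
                have hXD := (ihm (by omega) (by omega)).2
                have hXs : ∑ k, |hiddenState L w v ψ x (0+1) m k| ≤ P m := by
                  refine le_trans hX (le_of_eq ?_)
                  rw [Nat.zero_add, Nat.choose_self]
                  norm_num
                have hXDs : ∑ k, |hiddenState L w v ψ x (0+1) m k
                    - hiddenState L w' v' ψ x (0+1) m k| ≤ δ₂ * N m * P m := by
                  refine le_trans hXD (le_of_eq ?_)
                  norm_num
                exact baseT_real hδ₂ (hL0r (m+1)) (hNnn m) (hNsucc m)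
                  (hPnn m (by omega)) (hPsucc m) (hcge1 (m+1) h1m1 hm1HH)
                  (Finset.sum_nonneg fun _ _ => abs_nonneg _)
                  (Finset.sum_nonneg fun _ _ => abs_nonneg _) hXs hXDs
    | succ t ih =>
        intro g
        induction g with
        | zero => intro h1 _; exact absurd h1 (by omega)
        | succ m ihm =>
            intro _ hgH
            have h1m1 : (1:ℕ) ≤ m + 1 := by omega
            have hm1H : m + 1 ≤ H - 1 := hgH
            have hm1HH : m + 1 ≤ H := by omega
            have hDD : D * D ^ t = D ^ (t+1) := by rw [pow_succ]; ring
            constructor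
            · -- S step
              refine le_trans (recW (t+1) m hm1H) ?_
              have hv2 : ∑ j, |(v (m+1)).mulVec (hiddenState L w v ψ x (t+1) (m+1)) j|
                  ≤ ((rv (m+1):ℝ) * E') * ∑ k, |hiddenState L w v ψ x (t+1) (m+1) k| :=
                l1_mulVec_le _ _ _ (hvcol (m+1) h1m1 hm1H)
              have hY := (ih (m+1) h1m1 hm1H).1
              rcases Nat.eq_zero_or_pos m with rfl | hm
              · have hw1 : ∑ j, |(w (0+1)).mulVec (hiddenState L w v ψ x (t+1+1) 0) j|
                    ≤ ((rw (0+1):ℝ) * E') * 1 := by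
                  rw [mul_one, hx0 (t+1)]
                  exact l1_mulVec_le_inf _ _ _ (hwtot (0+1) (by omega) (by omega)) (hx _)
                have hC3 : (1:ℝ) + ((t + (0+1)).choose (0+1) : ℝ)
                    ≤ ((((t+1) + (0+1)).choose (0+1) : ℕ) : ℝ) := by
                  have hn : 1 + (t + (0+1)).choose (0+1) = ((t+1) + (0+1)).choose (0+1) := by
                    rw [show (0:ℕ)+1 = 1 from rfl, Nat.choose_one_right,
                      Nat.choose_one_right]
                    omega
                  exact_mod_cast hn.le
                have hX1 : (1:ℝ) ≤ P 0 * 1 * (D * D ^ t) := by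
                  rw [hP0, one_mul, one_mul, hDD]
                  exact hDt (t+1)
                calc ∑ j, |(w (0+1)).mulVec (hiddenState L w v ψ x (t+1+1) 0) j|
                      + ∑ j, |(v (0+1)).mulVec (hiddenState L w v ψ x (t+1) (0+1)) j|
                    ≤ ((rw (0+1):ℝ) * E') * 1
                      + ((rv (0+1):ℝ) * E') * ∑ k, |hiddenState L w v ψ x (t+1) (0+1) k| :=
                      add_le_add hw1 hv2
                  _ ≤ P (0+1) * ((((t+1) + (0+1)).choose (0+1) : ℕ) : ℝ) * (D * D ^ t) := by
                      refine combS_real (mul_nonneg (Nat.cast_nonneg _) hE0)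
                        (by nlinarith [mul_nonneg hδ₂ (hL0r (0+1))])
                        (mul_nonneg (Nat.cast_nonneg _) hE0)
                        (by nlinarith [mul_nonneg hδ₂ (hL0r (0+1)),
                          hdD (0+1) (by omega) (by omega)])
                        (hPnn 0 (by omega)) (hPsucc 0) hC3 zero_le_one (Nat.cast_nonneg _)
                        (hDtnn t) (by linarith) zero_le_one
                        (Finset.sum_nonneg fun _ _ => abs_nonneg _) hX1 hY
                  _ = P (0+1) * ((((t+1) + (0+1)).choose (0+1) : ℕ) : ℝ) * D ^ (t+1) := by
                      rw [hDD]
              · have hw2 : ∑ j, |(w (m+1)).mulVec (hiddenState L w v ψ x (t+1+1) m) j|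
                    ≤ ((rw (m+1):ℝ) * E') * ∑ k, |hiddenState L w v ψ x (t+1+1) m k| :=
                  l1_mulVec_le _ _ _ (hwcol (m+1) h1m1 hm1HH)
                have hX := (ihm (by omega) (by omega)).1
                rw [← hDD] at hX
                have e1 : t + (m+1) = (t+1) + m := by omega
                rw [e1] at hY
                have hC3 : (((t+1) + m).choose m : ℝ) + (((t+1) + m).choose (m+1) : ℝ)
                    ≤ ((((t+1) + (m+1)).choose (m+1) : ℕ) : ℝ) := by
                  have hpas : ((t+1) + (m+1)).choose (m+1)
                      = ((t+1) + m).choose m + ((t+1) + m).choose (m+1) := by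
                    rw [show (t+1) + (m+1) = ((t+1) + m) + 1 from by omega]
                    exact Nat.choose_succ_succ _ _
                  rw [hpas]
                  push_cast
                  linarith
                calc ∑ j, |(w (m+1)).mulVec (hiddenState L w v ψ x (t+1+1) m) j|
                      + ∑ j, |(v (m+1)).mulVec (hiddenState L w v ψ x (t+1) (m+1)) j|
                    ≤ ((rw (m+1):ℝ) * E') * ∑ k, |hiddenState L w v ψ x (t+1+1) m k|
                      + ((rv (m+1):ℝ) * E') * ∑ k, |hiddenState L w v ψ x (t+1) (m+1) k| :=
                      add_le_add hw2 hv2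
                  _ ≤ P (m+1) * ((((t+1) + (m+1)).choose (m+1) : ℕ) : ℝ) * (D * D ^ t) := by
                      refine combS_real (mul_nonneg (Nat.cast_nonneg _) hE0)
                        (by nlinarith [mul_nonneg hδ₂ (hL0r (m+1))])
                        (mul_nonneg (Nat.cast_nonneg _) hE0)
                        (by nlinarith [mul_nonneg hδ₂ (hL0r (m+1)),
                          hdD (m+1) (by omega) hm1H])
                        (hPnn m (by omega)) (hPsucc m) hC3 (Nat.cast_nonneg _) (Nat.cast_nonneg _)
                        (hDtnn t) (by linarith)
                        (Finset.sum_nonneg fun _ _ => abs_nonneg _)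
                        (Finset.sum_nonneg fun _ _ => abs_nonneg _) hX hY
                  _ = P (m+1) * ((((t+1) + (m+1)).choose (m+1) : ℕ) : ℝ) * D ^ (t+1) := by
                      rw [hDD]
            · -- T step
              refine le_trans (recD (t+1) m hm1H) ?_
              have hvd : ∑ j, |(v (m+1)).mulVec (hiddenState L w v ψ x (t+1) (m+1)) j
                    - (v' (m+1)).mulVec (hiddenState L w' v' ψ x (t+1) (m+1)) j|
                  ≤ (δ₂ * (L (m+1):ℝ)) * ∑ k, |hiddenState L w v ψ x (t+1) (m+1) k|
                    + (δ₂ * (L (m+1):ℝ) + (rv (m+1):ℝ) * E')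
                      * ∑ k, |hiddenState L w v ψ x (t+1) (m+1) k
                          - hiddenState L w' v' ψ x (t+1) (m+1) k| :=
                l1_mulVec_diff_le _ _ _ _ δ₂ _ (hvclose (m+1) h1m1 hm1H) (hv'col (m+1) h1m1 hm1H)
              have hY := (ih (m+1) h1m1 hm1H).1
              have hYD := (ih (m+1) h1m1 hm1H).2
              rcases Nat.eq_zero_or_pos m with rfl | hm
              · have hwd : ∑ j, |(w (0+1)).mulVec (hiddenState L w v ψ x (t+1+1) 0) j
                      - (w' (0+1)).mulVec (hiddenState L w' v' ψ x (t+1+1) 0) j|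
                    ≤ δ₂ * ((L (0+1):ℝ) * (L 0:ℝ)) := by
                  rw [hx0 (t+1), hx0' (t+1)]
                  have hsub : ∀ j, (w (0+1)).mulVec (x (t+1+1)) j - (w' (0+1)).mulVec (x (t+1+1)) j
                      = ((w (0+1)) - (w' (0+1))).mulVec (x (t+1+1)) j := by
                    intro j; rw [Matrix.sub_mulVec]; simp
                  calc ∑ j, |(w (0+1)).mulVec (x (t+1+1)) j - (w' (0+1)).mulVec (x (t+1+1)) j|
                      = ∑ j, |((w (0+1)) - (w' (0+1))).mulVec (x (t+1+1)) j| :=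
                        Finset.sum_congr rfl fun j _ => by rw [hsub j]
                    _ ≤ δ₂ * ((L (0+1):ℝ) * (L 0:ℝ)) := by
                        refine l1_mulVec_le_inf _ _ _ ?_ (hx _)
                        calc ∑ j, ∑ k, |((w (0+1)) - (w' (0+1))) j k|
                            ≤ ∑ _j : Fin (L (0+1)), ∑ _k : Fin (L 0), δ₂ := by
                              refine Finset.sum_le_sum fun j _ => Finset.sum_le_sum fun k _ => ?_
                              simpa [Matrix.sub_apply] using hwclose (0+1) (by omega) (by omega) j k
                          _ = δ₂ * ((L (0+1):ℝ) * (L 0:ℝ)) := by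
                              simp [Finset.sum_const, Finset.card_univ]
                              ring
                have hYs : ∑ k, |hiddenState L w v ψ x (t+1) (0+1) k|
                    ≤ P (0+1) * ((t:ℝ) + 1) * D ^ t := by
                  refine le_trans hY (le_of_eq ?_)
                  rw [show (t + (0+1)).choose (0+1) = t + 1 from by
                    rw [show (0:ℕ)+1 = 1 from rfl, Nat.choose_one_right]]
                  push_cast
                  ring
                have hYDs : ∑ k, |hiddenState L w v ψ x (t+1) (0+1) k
                    - hiddenState L w' v' ψ x (t+1) (0+1) k|
                    ≤ δ₂ * N (0+1) * ((t:ℝ) + 1) ^ 2 * P (0+1) * D ^ t := by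
                  refine le_trans hYD (le_of_eq ?_)
                  push_cast
                  ring
                have hN1'' : N (0+1) = (L 0:ℝ) * (L (0+1):ℝ) + (L (0+1):ℝ) := by
                  rw [show ((0:ℕ)+1) = 1 from rfl, hN1]
                calc ∑ j, |(w (0+1)).mulVec (hiddenState L w v ψ x (t+1+1) 0) j
                      - (w' (0+1)).mulVec (hiddenState L w' v' ψ x (t+1+1) 0) j|
                      + ∑ j, |(v (0+1)).mulVec (hiddenState L w v ψ x (t+1) (0+1)) j
                      - (v' (0+1)).mulVec (hiddenState L w' v' ψ x (t+1) (0+1)) j|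
                    ≤ δ₂ * ((L (0+1):ℝ) * (L 0:ℝ))
                      + ((δ₂ * (L (0+1):ℝ)) * ∑ k, |hiddenState L w v ψ x (t+1) (0+1) k|
                        + (δ₂ * (L (0+1):ℝ) + (rv (0+1):ℝ) * E')
                          * ∑ k, |hiddenState L w v ψ x (t+1) (0+1) k
                              - hiddenState L w' v' ψ x (t+1) (0+1) k|) :=
                      add_le_add hwd hvd
                  _ ≤ δ₂ * N (0+1) * (((t:ℝ) + 1) + 1) ^ 2 * P (0+1) * (D * D ^ t) := by
                      refine combT1_real hδ₂ (hL0r (0+1)) (hL0r 0) hN1''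
                        (hPone (0+1) (by omega))
                        (hdD (0+1) (by omega) (by omega))
                        (by nlinarith [mul_nonneg hδ₂ (hL0r (0+1)),
                          mul_nonneg (Nat.cast_nonneg (α := ℝ) (rv (0+1))) hE0])
                        hD1 (hDt t) rfl (by positivity)
                        (Finset.sum_nonneg fun _ _ => abs_nonneg _)
                        (Finset.sum_nonneg fun _ _ => abs_nonneg _) le_rfl hYs hYDs
                  _ = δ₂ * N (0+1) * (((t+1+1 : ℕ)) : ℝ) ^ (0+1+1) * P (0+1) * D ^ (t+1) := by
                      push_cast
                      ring
              · have hwd : ∑ j, |(w (m+1)).mulVec (hiddenState L w v ψ x (t+1+1) m) j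
                      - (w' (m+1)).mulVec (hiddenState L w' v' ψ x (t+1+1) m) j|
                    ≤ (δ₂ * (L (m+1):ℝ)) * ∑ k, |hiddenState L w v ψ x (t+1+1) m k|
                      + (δ₂ * (L (m+1):ℝ) + (rw (m+1):ℝ) * E')
                        * ∑ k, |hiddenState L w v ψ x (t+1+1) m k
                            - hiddenState L w' v' ψ x (t+1+1) m k| :=
                  l1_mulVec_diff_le _ _ _ _ δ₂ _ (hwclose (m+1) h1m1 hm1HH)
                    (hw'col (m+1) h1m1 hm1HH)
                have hX := (ihm (by omega) (by omega)).1
                have hXD := (ihm (by omega) (by omega)).2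
                rw [← hDD] at hX hXD
                have hXDs : ∑ k, |hiddenState L w v ψ x (t+1+1) m k
                    - hiddenState L w' v' ψ x (t+1+1) m k|
                    ≤ δ₂ * N m * (((t:ℝ) + 1) + 1) ^ (m+1) * P m * (D * D ^ t) := by
                  refine le_trans hXD (le_of_eq ?_)
                  push_cast
                  ring
                have hYDs : ∑ k, |hiddenState L w v ψ x (t+1) (m+1) k
                    - hiddenState L w' v' ψ x (t+1) (m+1) k|
                    ≤ δ₂ * N (m+1) * ((t:ℝ) + 1) ^ (m+1+1) * P (m+1) * D ^ t := by
                  refine le_trans hYD (le_of_eq ?_)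
                  push_cast
                  ring
                have hCt : (((t+1) + m).choose m : ℝ) + ((t + (m+1)).choose (m+1) : ℝ)
                    ≤ (((t:ℝ) + 1) + 1) ^ (m+1) := by
                  have hpas : ((t+1) + m).choose m + (t + (m+1)).choose (m+1)
                      = ((t+1) + (m+1)).choose (m+1) := by
                    rw [show t + (m+1) = (t+1) + m from by omega,
                      show (t+1) + (m+1) = ((t+1) + m) + 1 from by omega]
                    exact (Nat.choose_succ_succ _ _).symm
                  have hle : ((t+1) + (m+1)).choose (m+1) ≤ (t+2) ^ (m+1) := by
                    have h9 := choose_le_pow_nat (m+1) (t+2) (by omega)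
                    have e2 : t + 2 + (m+1) - 1 = (t+1) + (m+1) := by omega
                    rwa [e2] at h9
                  have h10 : (((t+1) + m).choose m + (t + (m+1)).choose (m+1) : ℕ)
                      ≤ (t+2) ^ (m+1) := by rw [hpas]; exact hle
                  calc (((t+1) + m).choose m : ℝ) + ((t + (m+1)).choose (m+1) : ℝ)
                      = (((((t+1) + m).choose m + (t + (m+1)).choose (m+1)) : ℕ) : ℝ) := by
                        push_cast; ring
                    _ ≤ (((t+2) ^ (m+1) : ℕ) : ℝ) := by exact_mod_cast h10
                    _ = (((t:ℝ) + 1) + 1) ^ (m+1) := by push_cast; ring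
                calc ∑ j, |(w (m+1)).mulVec (hiddenState L w v ψ x (t+1+1) m) j
                      - (w' (m+1)).mulVec (hiddenState L w' v' ψ x (t+1+1) m) j|
                      + ∑ j, |(v (m+1)).mulVec (hiddenState L w v ψ x (t+1) (m+1)) j
                      - (v' (m+1)).mulVec (hiddenState L w' v' ψ x (t+1) (m+1)) j|
                    ≤ ((δ₂ * (L (m+1):ℝ)) * ∑ k, |hiddenState L w v ψ x (t+1+1) m k|
                      + (δ₂ * (L (m+1):ℝ) + (rw (m+1):ℝ) * E')
                        * ∑ k, |hiddenState L w v ψ x (t+1+1) m k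
                            - hiddenState L w' v' ψ x (t+1+1) m k|)
                      + ((δ₂ * (L (m+1):ℝ)) * ∑ k, |hiddenState L w v ψ x (t+1) (m+1) k|
                        + (δ₂ * (L (m+1):ℝ) + (rv (m+1):ℝ) * E')
                          * ∑ k, |hiddenState L w v ψ x (t+1) (m+1) k
                              - hiddenState L w' v' ψ x (t+1) (m+1) k|) :=
                      add_le_add hwd hvd
                  _ ≤ δ₂ * N (m+1) * ((((t:ℝ) + 1) + 1)) ^ (m+1+1) * P (m+1) * (D * D ^ t) := by
                      have hPpPg : P m ≤ P (m+1) := by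
                        have h8 := hPsucc m
                        nlinarith [hPnn m (by omega), hcge1 (m+1) h1m1 hm1HH]
                      refine combT_real (m+1) hδ₂ (hL0r (m+1)) (hNnn m) (hNsucc m)
                        (by nlinarith [mul_nonneg hδ₂ (hL0r (m+1)),
                          mul_nonneg (Nat.cast_nonneg (α := ℝ) (rw (m+1))) hE0])
                        (hPnn m (by omega)) (hPsucc m) hPpPg
                        (hdD (m+1) h1m1 hm1H)
                        (by nlinarith [mul_nonneg hδ₂ (hL0r (m+1)),
                          mul_nonneg (Nat.cast_nonneg (α := ℝ) (rv (m+1))) hE0])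
                        hD1 (hDtnn t) rfl (by positivity)
                        (Finset.sum_nonneg fun _ _ => abs_nonneg _)
                        (Finset.sum_nonneg fun _ _ => abs_nonneg _)
                        (Finset.sum_nonneg fun _ _ => abs_nonneg _)
                        (Finset.sum_nonneg fun _ _ => abs_nonneg _)
                        (Nat.cast_nonneg _) (Nat.cast_nonneg _)
                        hX hY hCt hXDs hYDs
                  _ = δ₂ * N (m+1) * (((t+1+1 : ℕ)) : ℝ) ^ (m+1+1) * P (m+1) * D ^ (t+1) := by
                      push_cast
                      ring
  -- final assembly
  obtain ⟨s, rfl⟩ : ∃ s, t = s + 1 := ⟨t - 1, by omega⟩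
  have hkey := key s (H-1) (by omega) le_rfl
  have hH1 : H - 1 + 1 = H := by omega
  have hNH' : N H = N (H-1) + (L H:ℝ) := by
    have h := hNsucc (H-1); rwa [hH1] at h
  have hPH' : P H = P (H-1) * (δ₂ * (L H:ℝ) + (rw H:ℝ) * E') := by
    have h := hPsucc (H-1); rwa [hH1] at h
  have goal_eq : (∑ j, |output L H w v ψ x (s+1) j - output L H w' v' ψ x (s+1) j|)
      = ∑ j, |(w H).mulVec (hiddenState L w v ψ x (s+1) (H-1)) j
          - (w' H).mulVec (hiddenState L w' v' ψ x (s+1) (H-1)) j| := rfl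
  rw [goal_eq]
  have hbound := l1_mulVec_diff_le (w H) (w' H)
    (hiddenState L w v ψ x (s+1) (H-1)) (hiddenState L w' v' ψ x (s+1) (H-1))
    δ₂ (δ₂ * (L H:ℝ) + (rw H:ℝ) * E') (hwclose H (by omega) le_rfl) (hw'col H (by omega) le_rfl)
  refine le_trans hbound ?_
  have hC1σ : ((s + (H-1)).choose (H-1) : ℝ) ≤ (((s+1 : ℕ)) : ℝ) ^ (H-1) := by
    have h9 := choose_le_pow_nat (H-1) (s+1) (by omega)
    have e9 : s + 1 + (H-1) - 1 = s + (H-1) := by omega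
    rw [e9] at h9
    exact_mod_cast h9
  have hfin := final_real (H-1) hδ₂ (hL0r H) (hNnn (H-1)) hNH'
      (hPnn (H-1) (by omega)) hPH' (hcge1 H (by omega) le_rfl)
      (by exact_mod_cast Nat.succ_le_succ (Nat.zero_le s))
      (hDtnn s)
      (Finset.sum_nonneg fun _ _ => abs_nonneg _)
      (Finset.sum_nonneg fun _ _ => abs_nonneg _)
      (Nat.cast_nonneg _) hC1σ hkey.1 hkey.2
  refine le_trans hfin (le_of_eq ?_)
  have eN : N H = (L 0:ℝ) * (L 1:ℝ) + ∑ k ∈ Finset.Icc 1 H, (L k:ℝ) := by rw [hNdef]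
  have eP : P H = ∏ k ∈ Finset.Icc 1 H, (δ₂ * (L k:ℝ) + (rw k:ℝ) * E') := by rw [hPdef]
  rw [hH1, eN, eP, ← hDdef]
  rw [show s + 1 - 1 = s from by omega]
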